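/- arXiv:math/0312177 — 3 statements merged into one kernel-verified Lean document; each statement's English description precedes it below -/
import Mathlib

section
/- Unitary reduction to diagonal weight: Let ρ : ℤ → ℂ^{m×m} be self-adjoint and invertible. Then there exist unitary matrices Q(k) ∈ ℂ^{m×m} and diagonal real matrices d(k) ∈ ℝ^{m×m} with d(k) > 0 (positive definite) and sign matrices ε̃(k) (diagonal with ±1 entries) such that the difference expression 𝒮_ρ − B is unitarily equivalent, via the block-diagonal transformations U_ρ(k) = diag(Q(k), Q(k−1)) and U_ε(k) = diag(ε̃(k), ε̃(k)), to an expression 𝒮_d − ℬ of the same form in which the weight d is diagonal and positive definite. -/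
open Matrix ComplexOrder

/-- Positive-index sign accumulator. -/
noncomputable def EposAux (σ : ℤ → ℝ) : ℕ → ℝ
  | 0 => 1
  | n + 1 => EposAux σ n * σ n

/-- Negative-index sign accumulator: `EnegAux σ n = E (-n)`. -/
noncomputable def EnegAux (σ : ℤ → ℝ) : ℕ → ℝ
  | 0 => 1
  | n + 1 => EnegAux σ n * σ (-(n + 1 : ℕ))

/-- Sign function on ℤ with `signE σ 0 = 1` and `signE σ (k+1) = signE σ k * σ k`. -/
noncomputable def signE (σ : ℤ → ℝ) : ℤ → ℝ
  | Int.ofNat n => EposAux σ n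
  | Int.negSucc n => EnegAux σ (n + 1)

lemma signE_sq (σ : ℤ → ℝ) (hσ : ∀ k, σ k * σ k = 1) (k : ℤ) :
    signE σ k * signE σ k = 1 := by
  have hp : ∀ n : ℕ, EposAux σ n * EposAux σ n = 1 := by
    intro n
    induction n with
    | zero => simp [EposAux]
    | succ n ih =>
        show EposAux σ n * σ n * (EposAux σ n * σ n) = 1
        rw [mul_mul_mul_comm, ih, one_mul, hσ]
  have hn : ∀ n : ℕ, EnegAux σ n * EnegAux σ n = 1 := by
    intro n
    induction n with
    | zero => simp [EnegAux]
    | succ n ih =>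
        show EnegAux σ n * σ (-(n + 1 : ℕ)) * (EnegAux σ n * σ (-(n + 1 : ℕ))) = 1
        rw [mul_mul_mul_comm, ih, one_mul, hσ]
  cases k with
  | ofNat n => exact hp n
  | negSucc n => exact hn (n + 1)

lemma signE_succ (σ : ℤ → ℝ) (hσ : ∀ k, σ k * σ k = 1) (k : ℤ) :
    signE σ (k + 1) = signE σ k * σ k := by
  cases k with
  | ofNat n =>
      show signE σ (Int.ofNat (n + 1)) = _
      rfl
  | negSucc n =>
      cases n with
      | zero =>
          show (1 : ℝ) = EnegAux σ 1 * σ (Int.negSucc 0)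
          show (1 : ℝ) = EnegAux σ 0 * σ (-(0 + 1 : ℕ)) * σ (Int.negSucc 0)
          have he : ((-(0 + 1 : ℕ) : ℤ)) = Int.negSucc 0 := by decide
          rw [he]
          show (1 : ℝ) = 1 * σ (Int.negSucc 0) * σ (Int.negSucc 0)
          rw [one_mul, hσ]
      | succ n =>
          show EnegAux σ (n + 1) = EnegAux σ (n + 2) * σ (Int.negSucc (n + 1))
          have h2 : EnegAux σ (n + 2) = EnegAux σ (n + 1) * σ (-(n + 2 : ℕ)) := rfl
          have he : ((-(n + 2 : ℕ) : ℤ)) = Int.negSucc (n + 1) := by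
            simp only [Int.negSucc_eq]
            push_cast
            ring
          rw [h2, he, mul_assoc, hσ, mul_one]

/-- Unitary reduction to a diagonal positive definite weight:
there exist unitaries Q(k), diagonal positive definite real d(k) and diagonal sign
matrices ε̃(k) such that conjugating the difference expression 𝒮_ρ − B by the block
transformations U_ε(k)U_ρ(k) = diag(ε̃(k)Q(k), ε̃(k)Q(k−1)) yields 𝒮_d − ℬ with
ℬ the conjugated (self-adjoint) coefficient. -/
theorem stmt4 {m r : ℕ} (ρ : ℤ → Matrix (Fin m) (Fin m) ℂ)
    (B : ℤ → Matrix (Fin m ⊕ Fin m) (Fin m ⊕ Fin m) ℂ)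
    (hρ : ∀ k, (ρ k)ᴴ = ρ k) (hρu : ∀ k, IsUnit (ρ k))
    (hB : ∀ k, (B k)ᴴ = B k) :
    ∃ (Q d ε : ℤ → Matrix (Fin m) (Fin m) ℂ),
      (∀ k, Q k ∈ Matrix.unitaryGroup (Fin m) ℂ) ∧
      (∀ k, ∃ δ : Fin m → ℝ, (∀ i, 0 < δ i) ∧ d k = Matrix.diagonal fun i => (δ i : ℂ)) ∧
      (∀ k, ∃ s : Fin m → ℂ, (∀ i, s i = 1 ∨ s i = -1) ∧ ε k = Matrix.diagonal s) ∧
      (∀ (ψ₁ ψ₂ : ℤ → Matrix (Fin m) (Fin r) ℂ) (k : ℤ),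
        fromBlocks (ε k * Q k) 0 0 (ε k * Q (k - 1)) *
          (fromRows (ρ k * ψ₂ (k + 1)) (ρ (k - 1) * ψ₁ (k - 1))
            - B k * fromRows (ψ₁ k) (ψ₂ k))
        = fromRows (d k * (ε (k + 1) * Q k * ψ₂ (k + 1)))
            (d (k - 1) * (ε (k - 1) * Q (k - 1) * ψ₁ (k - 1)))
          - (fromBlocks (ε k * Q k) 0 0 (ε k * Q (k - 1)) * B k *
              (fromBlocks (ε k * Q k) 0 0 (ε k * Q (k - 1)))ᴴ) *
            fromRows (ε k * Q k * ψ₁ k) (ε k * Q (k - 1) * ψ₂ k)) := by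
  classical
  have hH : ∀ k, (ρ k).IsHermitian := hρ
  -- eigen data
  set dt : ℤ → Fin m → ℝ := fun k => (hH k).eigenvalues with hdt
  have hdt0 : ∀ k i, dt k i ≠ 0 := by
    intro k i
    have hdet : (ρ k).det ≠ 0 :=
      ((Matrix.isUnit_iff_isUnit_det (ρ k)).mp (hρu k)).ne_zero
    rw [(hH k).det_eq_prod_eigenvalues] at hdet
    intro h
    apply hdet
    refine Finset.prod_eq_zero (Finset.mem_univ i) ?_
    have h0 : (hH k).eigenvalues i = 0 := h
    simp [h0]
  -- sign of eigenvalues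
  set σ : ℤ → Fin m → ℝ := fun k i => if 0 < dt k i then 1 else -1 with hσdef
  have hσsq : ∀ k i, σ k i * σ k i = 1 := by
    intro k i; by_cases h : 0 < dt k i <;> simp [hσdef, h]
  have hσd : ∀ k i, 0 < σ k i * dt k i := by
    intro k i
    by_cases h : 0 < dt k i
    · simpa [hσdef, h] using h
    · have hneg : dt k i < 0 := lt_of_le_of_ne (not_lt.mp h) (hdt0 k i)
      simp only [hσdef, h, if_false]
      nlinarith
  -- accumulated sign
  set E : ℤ → Fin m → ℝ := fun k i => signE (fun j => σ j i) k with hEdef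
  have hE1 : ∀ k i, E k i * E k i = 1 := fun k i =>
    signE_sq _ (fun j => hσsq j i) k
  have hEsucc : ∀ k i, E (k + 1) i = E k i * σ k i := fun k i =>
    signE_succ _ (fun j => hσsq j i) k
  -- the matrices
  set Q : ℤ → Matrix (Fin m) (Fin m) ℂ :=
    fun k => star ((hH k).eigenvectorUnitary : Matrix (Fin m) (Fin m) ℂ) with hQdef
  set d : ℤ → Matrix (Fin m) (Fin m) ℂ :=
    fun k => Matrix.diagonal (fun i => ((E k i * E (k + 1) i * dt k i : ℝ) : ℂ)) with hddef
  set ε : ℤ → Matrix (Fin m) (Fin m) ℂ :=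
    fun k => Matrix.diagonal (fun i => ((E k i : ℝ) : ℂ)) with hεdef
  refine ⟨Q, d, ε, ?_, ?_, ?_, ?_⟩
  · intro k
    exact Unitary.star_mem ((hH k).eigenvectorUnitary).2
  · intro k
    refine ⟨fun i => E k i * E (k + 1) i * dt k i, fun i => ?_, rfl⟩
    show 0 < E k i * E (k + 1) i * dt k i
    rw [hEsucc k i]
    nlinarith [hE1 k i, hσd k i]
  · intro k
    refine ⟨fun i => ((E k i : ℝ) : ℂ), fun i => ?_, rfl⟩
    rcases mul_self_eq_one_iff.mp (hE1 k i) with h | h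
    · left; show ((E k i : ℝ) : ℂ) = 1; rw [h]; norm_num
    · right; show ((E k i : ℝ) : ℂ) = -1; rw [h]; norm_num
  · -- main identity
    -- Q k * ρ k = D̃ k * Q k
    have hQρ : ∀ k, Q k * ρ k =
        Matrix.diagonal (fun i => ((dt k i : ℝ) : ℂ)) * Q k := by
      intro k
      set U : Matrix (Fin m) (Fin m) ℂ :=
        ((hH k).eigenvectorUnitary : Matrix (Fin m) (Fin m) ℂ) with hUdef
      have hs : star U * ρ k * U = Matrix.diagonal (fun i => ((dt k i : ℝ) : ℂ)) :=
        by
          have h := (hH k).conjStarAlgAut_star_eigenvectorUnitary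
          rw [Unitary.conjStarAlgAut_star_apply] at h
          exact h
      have hUU : U * star U = 1 :=
        Unitary.mul_star_self_of_mem ((hH k).eigenvectorUnitary).2
      calc Q k * ρ k = star U * ρ k := rfl
        _ = star U * ρ k * (U * star U) := by rw [hUU, mul_one]
        _ = (star U * ρ k * U) * star U := by simp only [Matrix.mul_assoc]
        _ = Matrix.diagonal (fun i => ((dt k i : ℝ) : ℂ)) * star U := by rw [hs]
        _ = Matrix.diagonal (fun i => ((dt k i : ℝ) : ℂ)) * Q k := rfl
    -- key diagonal identities
    have hdiagA : ∀ k, ε k * Matrix.diagonal (fun i => ((dt k i : ℝ) : ℂ))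
        = d k * ε (k + 1) := by
      intro k
      show Matrix.diagonal (fun i => ((E k i : ℝ) : ℂ)) *
          Matrix.diagonal (fun i => ((dt k i : ℝ) : ℂ)) =
        Matrix.diagonal (fun i => ((E k i * E (k + 1) i * dt k i : ℝ) : ℂ)) *
          Matrix.diagonal (fun i => ((E (k + 1) i : ℝ) : ℂ))
      simp only [Matrix.diagonal_mul_diagonal]
      apply congrArg Matrix.diagonal
      funext i
      have hre : E k i * dt k i = (E k i * E (k + 1) i * dt k i) * E (k + 1) i := by
        linear_combination (-(E k i * dt k i)) * hE1 (k + 1) i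
      exact_mod_cast congrArg Complex.ofReal hre
    have hdiagB : ∀ k, ε (k + 1) * Matrix.diagonal (fun i => ((dt k i : ℝ) : ℂ))
        = d k * ε k := by
      intro k
      show Matrix.diagonal (fun i => ((E (k + 1) i : ℝ) : ℂ)) *
          Matrix.diagonal (fun i => ((dt k i : ℝ) : ℂ)) =
        Matrix.diagonal (fun i => ((E k i * E (k + 1) i * dt k i : ℝ) : ℂ)) *
          Matrix.diagonal (fun i => ((E k i : ℝ) : ℂ))
      simp only [Matrix.diagonal_mul_diagonal]
      apply congrArg Matrix.diagonal
      funext i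
      have hre : E (k + 1) i * dt k i = (E k i * E (k + 1) i * dt k i) * E k i := by
        linear_combination (-(E (k + 1) i * dt k i)) * hE1 k i
      exact_mod_cast congrArg Complex.ofReal hre
    have hA : ∀ k, ε k * (Q k * ρ k) = d k * (ε (k + 1) * Q k) := by
      intro k
      rw [hQρ k, ← mul_assoc, ← mul_assoc, hdiagA k]
    have hB2 : ∀ k, ε (k + 1) * (Q k * ρ k) = d k * (ε k * Q k) := by
      intro k
      rw [hQρ k, ← mul_assoc, ← mul_assoc, hdiagB k]
    -- unitarity of ε k * Q j
    have hεQ : ∀ k j, (ε k * Q j)ᴴ * (ε k * Q j) = 1 := by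
      intro k j
      have hεH : (ε k)ᴴ = ε k := by
        show (Matrix.diagonal (fun i => ((E k i : ℝ) : ℂ)))ᴴ = _
        rw [Matrix.diagonal_conjTranspose]
        apply congrArg Matrix.diagonal
        funext i
        simp [Complex.conj_ofReal]
      have hεε : ε k * ε k = (1 : Matrix (Fin m) (Fin m) ℂ) := by
        show Matrix.diagonal (fun i => ((E k i : ℝ) : ℂ)) *
            Matrix.diagonal (fun i => ((E k i : ℝ) : ℂ)) = 1
        rw [Matrix.diagonal_mul_diagonal, ← Matrix.diagonal_one]
        apply congrArg Matrix.diagonal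
        funext i
        rw [← Complex.ofReal_mul, hE1 k i, Complex.ofReal_one]
      have hQQ : (Q j)ᴴ * Q j = 1 := by
        rw [← Matrix.star_eq_conjTranspose]
        show star (star ((hH j).eigenvectorUnitary : Matrix (Fin m) (Fin m) ℂ)) *
          star ((hH j).eigenvectorUnitary : Matrix (Fin m) (Fin m) ℂ) = 1
        rw [star_star]
        exact Unitary.mul_star_self_of_mem ((hH j).eigenvectorUnitary).2
      calc (ε k * Q j)ᴴ * (ε k * Q j)
          = (Q j)ᴴ * ((ε k)ᴴ * ε k) * Q j := by
            rw [Matrix.conjTranspose_mul]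
            simp only [Matrix.mul_assoc]
        _ = (Q j)ᴴ * Q j := by rw [hεH, hεε, mul_one]
        _ = 1 := hQQ
    intro ψ₁ ψ₂ k
    set V := fromBlocks (ε k * Q k) 0 0 (ε k * Q (k - 1)) with hVdef
    have hVV : Vᴴ * V = 1 := by
      have h1 := hεQ k k
      have h2 := hεQ k (k - 1)
      rw [hVdef, Matrix.fromBlocks_conjTranspose, Matrix.fromBlocks_multiply]
      simp only [Matrix.conjTranspose_zero, Matrix.mul_zero, Matrix.zero_mul,
        add_zero, zero_add, h1, h2, Matrix.fromBlocks_one]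
    -- row identities
    have htop : ε k * Q k * (ρ k * ψ₂ (k + 1)) =
        d k * (ε (k + 1) * Q k * ψ₂ (k + 1)) := by
      calc ε k * Q k * (ρ k * ψ₂ (k + 1)) = (ε k * (Q k * ρ k)) * ψ₂ (k + 1) := by
            simp only [Matrix.mul_assoc]
        _ = (d k * (ε (k + 1) * Q k)) * ψ₂ (k + 1) := by rw [hA k]
        _ = d k * (ε (k + 1) * Q k * ψ₂ (k + 1)) := by simp only [Matrix.mul_assoc]
    have hbot : ε k * Q (k - 1) * (ρ (k - 1) * ψ₁ (k - 1)) =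
        d (k - 1) * (ε (k - 1) * Q (k - 1) * ψ₁ (k - 1)) := by
      have h := hB2 (k - 1)
      rw [sub_add_cancel] at h
      calc ε k * Q (k - 1) * (ρ (k - 1) * ψ₁ (k - 1))
          = (ε k * (Q (k - 1) * ρ (k - 1))) * ψ₁ (k - 1) := by simp only [Matrix.mul_assoc]
        _ = (d (k - 1) * (ε (k - 1) * Q (k - 1))) * ψ₁ (k - 1) := by rw [h]
        _ = d (k - 1) * (ε (k - 1) * Q (k - 1) * ψ₁ (k - 1)) := by simp only [Matrix.mul_assoc]
    have hmulrows : ∀ (a b : Matrix (Fin m) (Fin r) ℂ),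
        V * fromRows a b = fromRows (ε k * Q k * a) (ε k * Q (k - 1) * b) := by
      intro a b
      rw [hVdef, Matrix.fromBlocks_mul_fromRows]
      simp
    rw [Matrix.mul_sub, hmulrows]
    congr 1
    · rw [Matrix.fromRows_ext_iff]
      exact ⟨htop, hbot⟩
    · calc V * (B k * fromRows (ψ₁ k) (ψ₂ k))
          = V * B k * (Vᴴ * V) * fromRows (ψ₁ k) (ψ₂ k) := by
            rw [hVV, mul_one, Matrix.mul_assoc]
        _ = (V * B k * Vᴴ) * (V * fromRows (ψ₁ k) (ψ₂ k)) := by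
            simp only [Matrix.mul_assoc]
        _ = (V * B k * Vᴴ) * fromRows (ε k * Q k * ψ₁ k) (ε k * Q (k - 1) * ψ₂ k) := by
            rw [hmulrows]
end

section
/- Symmetry of the finite-interval M-function: Under the standing hypotheses (ρ > 0, A ≥ 0, B self-adjoint, Atkinson definiteness, invertibility conditions), let Θ(z,·), Φ(z,·) be the normalized fundamental solutions with Ψ̂(z,k₀) = I_ρ(k₀)^{-1/2}(α* Jα*), let β satisfy ββ*=I_m, βJβ*=0, and define M(z,ℓ,k₀,α̃,β̃) = −[β̃Φ̂(z,ℓ)]^{-1}[β̃Θ̂(z,ℓ)] whenever β̃Φ̂(z,ℓ) is invertible. Then M(z̄,ℓ,k₀,α̃,β̃) = M(z,ℓ,k₀,α̃,β̃)*. -/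
open Matrix ComplexOrder

/-- The standard 2m×2m symplectic matrix J = [[0, I], [-I, 0]]. -/
def Jmat (m : ℕ) : Matrix (Fin m ⊕ Fin m) (Fin m ⊕ Fin m) ℂ :=
  Matrix.fromBlocks 0 1 (-1) 0

/-- The positive semidefinite square root, with the definition `Matrix.PosSemidef.sqrt` had
in Mathlib of December 2024 (since removed from Mathlib). -/
noncomputable def Matrix.PosSemidef.sqrt {n 𝕜 : Type*} [Fintype n] [DecidableEq n] [RCLike 𝕜]
    {A : Matrix n n 𝕜} (hA : A.PosSemidef) : Matrix n n 𝕜 :=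
  hA.1.eigenvectorUnitary.1 * diagonal ((↑) ∘ (√·) ∘ hA.1.eigenvalues) *
    (star hA.1.eigenvectorUnitary : Matrix n n 𝕜)

private lemma Matrix.PosSemidef.posSemidef_sqrt {n 𝕜 : Type*} [Fintype n] [DecidableEq n] [RCLike 𝕜]
    {A : Matrix n n 𝕜} (hA : A.PosSemidef) : PosSemidef hA.sqrt := by
  apply PosSemidef.mul_mul_conjTranspose_same
  refine posSemidef_diagonal_iff.mpr fun i ↦ ?_
  rw [Function.comp_apply, RCLike.nonneg_iff]
  constructor
  · simp only [Function.comp_apply, RCLike.ofReal_re]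
    exact Real.sqrt_nonneg _
  · simp only [Function.comp_apply, RCLike.ofReal_im]

private lemma Matrix.PosSemidef.sqrt_mul_self {n 𝕜 : Type*} [Fintype n] [DecidableEq n] [RCLike 𝕜]
    {A : Matrix n n 𝕜} (hA : A.PosSemidef) : hA.sqrt * hA.sqrt = A := by
  let C : Matrix n n 𝕜 := hA.1.eigenvectorUnitary
  let E := diagonal ((↑) ∘ Real.sqrt ∘ hA.1.eigenvalues : n → 𝕜)
  suffices C * (E * (star C * C) * E) * star C = A by
    rw [Matrix.PosSemidef.sqrt]
    simpa only [← mul_assoc] using this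
  have : E * E = diagonal ((↑) ∘ hA.1.eigenvalues) := by
    rw [diagonal_mul_diagonal]
    congr! with v
    simp [← pow_two, ← RCLike.ofReal_pow, Real.sq_sqrt (hA.eigenvalues_nonneg v)]
  have h := hA.1.spectral_theorem
  rw [Unitary.conjStarAlgAut_apply] at h
  simpa [C, this, Matrix.mul_assoc] using h.symm

private lemma const_of_step {M : Type*} (f : ℤ → M) (h : ∀ k : ℤ, f k = f (k - 1)) :
    ∀ j k : ℤ, f j = f k := by
  have h0 : ∀ j : ℤ, f j = f 0 := by
    intro j
    induction j using Int.induction_on with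
    | zero => rfl
    | succ n ih =>
        have := h ((n : ℤ) + 1)
        simpa [this] using ih
    | pred n ih =>
        calc f (-(n : ℤ) - 1) = f (-(n : ℤ)) := (h (-(n : ℤ))).symm
        _ = f 0 := ih
  intro j k; rw [h0 j, h0 k]

private lemma toBlocks₁₁_conjTranspose {R : Type*} [Star R] {n o l p : Type*}
    (M : Matrix (n ⊕ o) (l ⊕ p) R) : (Mᴴ).toBlocks₁₁ = (M.toBlocks₁₁)ᴴ := rfl

private lemma toBlocks₁₂_conjTranspose {R : Type*} [Star R] {n o l p : Type*}
    (M : Matrix (n ⊕ o) (l ⊕ p) R) : (Mᴴ).toBlocks₁₂ = (M.toBlocks₂₁)ᴴ := rfl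

private lemma toBlocks₂₁_conjTranspose {R : Type*} [Star R] {n o l p : Type*}
    (M : Matrix (n ⊕ o) (l ⊕ p) R) : (Mᴴ).toBlocks₂₁ = (M.toBlocks₁₂)ᴴ := rfl

private lemma toBlocks₂₂_conjTranspose {R : Type*} [Star R] {n o l p : Type*}
    (M : Matrix (n ⊕ o) (l ⊕ p) R) : (Mᴴ).toBlocks₂₂ = (M.toBlocks₂₂)ᴴ := rfl

private lemma wronskian_const {m : ℕ} (ρ : ℤ → Matrix (Fin m) (Fin m) ℂ)
    (A B : ℤ → Matrix (Fin m ⊕ Fin m) (Fin m ⊕ Fin m) ℂ)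
    (hA : ∀ k, (A k).PosSemidef) (hB : ∀ k, (B k)ᴴ = B k)
    (hρH : ∀ k, (ρ k)ᴴ = ρ k) (w : ℂ)
    (φ₁ φ₂ ψ₁ ψ₂ : ℤ → Matrix (Fin m) (Fin m) ℂ)
    (hφ : ∀ k : ℤ, fromRows (ρ k * φ₂ (k + 1)) (ρ (k - 1) * φ₁ (k - 1))
          = (w • A k + B k) * fromRows (φ₁ k) (φ₂ k))
    (hψ : ∀ k : ℤ, fromRows (ρ k * ψ₂ (k + 1)) (ρ (k - 1) * ψ₁ (k - 1))
          = ((star w) • A k + B k) * fromRows (ψ₁ k) (ψ₂ k)) :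
    ∀ j k : ℤ,
      (ψ₁ j)ᴴ * (ρ j * φ₂ (j + 1)) - (ρ j * ψ₂ (j + 1))ᴴ * φ₁ j
        = (ψ₁ k)ᴴ * (ρ k * φ₂ (k + 1)) - (ρ k * ψ₂ (k + 1))ᴴ * φ₁ k := by
  apply const_of_step
      (f := fun k => (ψ₁ k)ᴴ * (ρ k * φ₂ (k + 1)) - (ρ k * ψ₂ (k + 1))ᴴ * φ₁ k)
  intro k
  simp only [show (k : ℤ) - 1 + 1 = k by ring]
  have e := hφ k
  have f := hψ k
  set S := w • A k + B k with hSdef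
  set T := (star w) • A k + B k with hTdef
  have hTS : Tᴴ = S := by
    rw [hTdef, hSdef, conjTranspose_add, conjTranspose_smul, (hA k).1.eq, hB k, star_star]
  have hb11 : (T.toBlocks₁₁)ᴴ = S.toBlocks₁₁ := by
    rw [← toBlocks₁₁_conjTranspose, hTS]
  have hb12 : (T.toBlocks₁₂)ᴴ = S.toBlocks₂₁ := by
    rw [← toBlocks₂₁_conjTranspose, hTS]
  have hb21 : (T.toBlocks₂₁)ᴴ = S.toBlocks₁₂ := by
    rw [← toBlocks₁₂_conjTranspose, hTS]
  have hb22 : (T.toBlocks₂₂)ᴴ = S.toBlocks₂₂ := by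
    rw [← toBlocks₂₂_conjTranspose, hTS]
  rw [← fromBlocks_toBlocks S, fromBlocks_mul_fromRows, fromRows_ext_iff] at e
  rw [← fromBlocks_toBlocks T, fromBlocks_mul_fromRows, fromRows_ext_iff] at f
  obtain ⟨e1, e2⟩ := e
  obtain ⟨f1, f2⟩ := f
  have hψρ : (ρ (k - 1) * ψ₂ k)ᴴ * φ₁ (k - 1) = (ψ₂ k)ᴴ * (ρ (k - 1) * φ₁ (k - 1)) := by
    rw [conjTranspose_mul, hρH, Matrix.mul_assoc]
  have hψρ' : (ψ₁ (k - 1))ᴴ * (ρ (k - 1) * φ₂ k) = (ρ (k - 1) * ψ₁ (k - 1))ᴴ * φ₂ k := by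
    rw [conjTranspose_mul, hρH, Matrix.mul_assoc]
  rw [hψρ', hψρ, e1, f1, f2, e2]
  simp only [conjTranspose_add, conjTranspose_mul, hb11, hb12, hb21, hb22]
  noncomm_ring

private lemma sandwich {m : ℕ} (ρ0 : Matrix (Fin m) (Fin m) ℂ) (hρ0 : ρ0ᴴ = ρ0)
    (a b c d : Matrix (Fin m) (Fin m) ℂ) :
    cᴴ * (ρ0 * b) - (ρ0 * d)ᴴ * a
      = (fromRows c d)ᴴ *
          ((fromBlocks 0 ρ0 (-ρ0) 0 : Matrix (Fin m ⊕ Fin m) (Fin m ⊕ Fin m) ℂ) * fromRows a b) := by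
  rw [conjTranspose_fromRows_eq_fromCols_conjTranspose, fromBlocks_mul_fromRows,
    fromCols_mul_fromRows]
  simp [conjTranspose_mul, hρ0, Matrix.mul_assoc, sub_eq_add_neg]


/-- Symmetry of the finite-interval M-function:
M(z̄,ℓ,k₀,α̃,β̃) = M(z,ℓ,k₀,α̃,β̃)*, where
M(w,ℓ,k₀,α̃,β̃) = −[β̃Φ̂(w,ℓ)]^{-1}[β̃Θ̂(w,ℓ)] and Ψ = (Θ Φ) is the fundamental
solution normalized by Ψ̂(w,k₀) = I_ρ(k₀)^{-1/2}(α* Jα*). -/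
theorem stmt8 {m : ℕ} (ρ : ℤ → Matrix (Fin m) (Fin m) ℂ)
    (A B : ℤ → Matrix (Fin m ⊕ Fin m) (Fin m ⊕ Fin m) ℂ)
    (hρ : ∀ k, (ρ k).PosDef) (hA : ∀ k, (A k).PosSemidef) (hB : ∀ k, (B k)ᴴ = B k)
    (hinv : ∀ (w : ℂ) (k : ℤ), IsUnit ((w • A k + B k).toBlocks₁₂))
    (k₀ ℓ : ℤ) (hℓ : ℓ ≠ k₀)
    (α β : Matrix (Fin m) (Fin m ⊕ Fin m) ℂ)
    (hα1 : α * αᴴ = 1) (hα2 : α * Jmat m * αᴴ = 0)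
    (hβ1 : β * βᴴ = 1) (hβ2 : β * Jmat m * βᴴ = 0)
    (Θ₁ Θ₂ Φ₁ Φ₂ : ℂ → ℤ → Matrix (Fin m) (Fin m) ℂ)
    (hsolΘ : ∀ (w : ℂ) (k : ℤ),
        fromRows (ρ k * Θ₂ w (k + 1)) (ρ (k - 1) * Θ₁ w (k - 1))
          = (w • A k + B k) * fromRows (Θ₁ w k) (Θ₂ w k))
    (hsolΦ : ∀ (w : ℂ) (k : ℤ),
        fromRows (ρ k * Φ₂ w (k + 1)) (ρ (k - 1) * Φ₁ w (k - 1))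
          = (w • A k + B k) * fromRows (Φ₁ w k) (Φ₂ w k))
    (hnorm : ∀ w : ℂ,
        fromCols (fromRows (Θ₁ w k₀) (Θ₂ w (k₀ + 1))) (fromRows (Φ₁ w k₀) (Φ₂ w (k₀ + 1)))
          = (fromBlocks (hρ k₀).posSemidef.sqrt 0 0 (hρ k₀).posSemidef.sqrt)⁻¹ *
            fromCols αᴴ (Jmat m * αᴴ))
    (hAtk : ∀ (w : ℂ) (φ₁ φ₂ : ℤ → Matrix (Fin m) (Fin 1) ℂ),
        (∀ k : ℤ, fromRows (ρ k * φ₂ (k + 1)) (ρ (k - 1) * φ₁ (k - 1))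
          = (w • A k + B k) * fromRows (φ₁ k) (φ₂ k)) →
        (¬ ∀ k, φ₁ k = 0 ∧ φ₂ k = 0) →
        ∀ c d : ℤ, c < d →
          (∑ k ∈ Finset.Icc (c + 1) d,
            (fromRows (φ₁ k) (φ₂ k))ᴴ * A k * fromRows (φ₁ k) (φ₂ k)).PosDef)
    (z : ℂ)
    (hz : IsUnit (β * fromBlocks (hρ ℓ).posSemidef.sqrt 0 0 (hρ ℓ).posSemidef.sqrt *
        fromRows (Φ₁ z ℓ) (Φ₂ z (ℓ + 1))))
    (hzc : IsUnit (β * fromBlocks (hρ ℓ).posSemidef.sqrt 0 0 (hρ ℓ).posSemidef.sqrt *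
        fromRows (Φ₁ (star z) ℓ) (Φ₂ (star z) (ℓ + 1)))) :
    -((β * fromBlocks (hρ ℓ).posSemidef.sqrt 0 0 (hρ ℓ).posSemidef.sqrt *
          fromRows (Φ₁ (star z) ℓ) (Φ₂ (star z) (ℓ + 1)))⁻¹ *
        (β * fromBlocks (hρ ℓ).posSemidef.sqrt 0 0 (hρ ℓ).posSemidef.sqrt *
          fromRows (Θ₁ (star z) ℓ) (Θ₂ (star z) (ℓ + 1))))
    = (-((β * fromBlocks (hρ ℓ).posSemidef.sqrt 0 0 (hρ ℓ).posSemidef.sqrt *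
          fromRows (Φ₁ z ℓ) (Φ₂ z (ℓ + 1)))⁻¹ *
        (β * fromBlocks (hρ ℓ).posSemidef.sqrt 0 0 (hρ ℓ).posSemidef.sqrt *
          fromRows (Θ₁ z ℓ) (Θ₂ z (ℓ + 1)))))ᴴ := by
  have hρH : ∀ k, (ρ k)ᴴ = ρ k := fun k => (hρ k).1.eq
  set s : Matrix (Fin m) (Fin m) ℂ := (hρ ℓ).posSemidef.sqrt with hsdef
  set sk : Matrix (Fin m) (Fin m) ℂ := (hρ k₀).posSemidef.sqrt with hskdef
  set D : Matrix (Fin m ⊕ Fin m) (Fin m ⊕ Fin m) ℂ := fromBlocks s 0 0 s with hDdef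
  set Dk : Matrix (Fin m ⊕ Fin m) (Fin m ⊕ Fin m) ℂ := fromBlocks sk 0 0 sk with hDkdef
  have hsH : sᴴ = s := by rw [hsdef]; exact (hρ ℓ).posSemidef.posSemidef_sqrt.1.eq
  have hskH : skᴴ = sk := by rw [hskdef]; exact (hρ k₀).posSemidef.posSemidef_sqrt.1.eq
  have hss : s * s = ρ ℓ := by rw [hsdef]; exact (hρ ℓ).posSemidef.sqrt_mul_self
  have hsksk : sk * sk = ρ k₀ := by rw [hskdef]; exact (hρ k₀).posSemidef.sqrt_mul_self
  have hskUnit : IsUnit sk.det := by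
    have h : IsUnit (sk.det * sk.det) := by
      rw [← det_mul, hsksk]
      exact (Matrix.isUnit_iff_isUnit_det _).mp (hρ k₀).isUnit
    exact isUnit_of_mul_isUnit_left h
  have hDkUnit : IsUnit Dk.det := by
    rw [hDkdef, det_fromBlocks_zero₂₁]
    exact hskUnit.mul hskUnit
  have hDH : Dᴴ = D := by rw [hDdef, fromBlocks_conjTranspose]; simp [hsH]
  have hDkH : Dkᴴ = Dk := by rw [hDkdef, fromBlocks_conjTranspose]; simp [hskH]
  have hDkinvH : (Dk⁻¹)ᴴ = Dk⁻¹ := by rw [conjTranspose_nonsing_inv, hDkH]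
  have hJJ : Jmat m * Jmat m = -1 := by
    rw [Jmat, fromBlocks_multiply]
    ext (i | i) (j | j) <;>
      simp [Matrix.one_apply, Matrix.fromBlocks, Sum.elim_inl, Sum.elim_inr]
  have hJH : (Jmat m)ᴴ = -(Jmat m) := by
    rw [Jmat, fromBlocks_conjTranspose]
    ext (i | i) (j | j) <;> simp [Matrix.fromBlocks, Matrix.one_apply]
  have hnJJ : (-(Jmat m)) * Jmat m = 1 := by rw [Matrix.neg_mul, hJJ, neg_neg]
  have hDJD : D * Jmat m * D = fromBlocks 0 (ρ ℓ) (-(ρ ℓ)) 0 := by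
    rw [hDdef, Jmat, fromBlocks_multiply, fromBlocks_multiply]
    simp [hss]
  have hDkJDk : Dk * Jmat m * Dk = fromBlocks 0 (ρ k₀) (-(ρ k₀)) 0 := by
    rw [hDkdef, Jmat, fromBlocks_multiply, fromBlocks_multiply]
    simp [hsksk]
  -- normalization at k₀
  have hnz := hnorm z
  rw [Matrix.mul_fromCols, fromCols_ext_iff] at hnz
  obtain ⟨hΘz, hΦz⟩ := hnz
  have hnc := hnorm (star z)
  rw [Matrix.mul_fromCols, fromCols_ext_iff] at hnc
  obtain ⟨hΘc, hΦc⟩ := hnc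
  -- main key: constancy of the Wronskian + normalization
  have key : ∀ (x₁ x₂ y₁ y₂ : ℤ → Matrix (Fin m) (Fin m) ℂ),
      (∀ k : ℤ, fromRows (ρ k * x₂ (k + 1)) (ρ (k - 1) * x₁ (k - 1))
          = (z • A k + B k) * fromRows (x₁ k) (x₂ k)) →
      (∀ k : ℤ, fromRows (ρ k * y₂ (k + 1)) (ρ (k - 1) * y₁ (k - 1))
          = ((star z) • A k + B k) * fromRows (y₁ k) (y₂ k)) →
      ∀ (xv yv : Matrix (Fin m ⊕ Fin m) (Fin m) ℂ),
      fromRows (x₁ k₀) (x₂ (k₀ + 1)) = Dk⁻¹ * xv →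
      fromRows (y₁ k₀) (y₂ (k₀ + 1)) = Dk⁻¹ * yv →
      (D * fromRows (y₁ ℓ) (y₂ (ℓ + 1)))ᴴ * (Jmat m * (D * fromRows (x₁ ℓ) (x₂ (ℓ + 1))))
        = yvᴴ * (Jmat m * xv) := by
    intro x₁ x₂ y₁ y₂ hx hy xv yv hxv hyv
    have W := wronskian_const ρ A B hA hB hρH z x₁ x₂ y₁ y₂ hx hy ℓ k₀
    have lhs_eq : (D * fromRows (y₁ ℓ) (y₂ (ℓ + 1)))ᴴ *
          (Jmat m * (D * fromRows (x₁ ℓ) (x₂ (ℓ + 1))))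
        = (y₁ ℓ)ᴴ * (ρ ℓ * x₂ (ℓ + 1)) - (ρ ℓ * y₂ (ℓ + 1))ᴴ * x₁ ℓ := by
      rw [sandwich (ρ ℓ) (hρH ℓ), ← hDJD, conjTranspose_mul, hDH]
      simp only [Matrix.mul_assoc]
    have rhs_eq : (y₁ k₀)ᴴ * (ρ k₀ * x₂ (k₀ + 1)) - (ρ k₀ * y₂ (k₀ + 1))ᴴ * x₁ k₀
        = yvᴴ * (Jmat m * xv) := by
      rw [sandwich (ρ k₀) (hρH k₀), hxv, hyv, ← hDkJDk, conjTranspose_mul, hDkinvH]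
      simp only [Matrix.mul_assoc]
      rw [Matrix.mul_nonsing_inv_cancel_left _ _ hDkUnit,
        Matrix.nonsing_inv_mul_cancel_left _ _ hDkUnit]
    rw [lhs_eq, W, rhs_eq]
  -- values of the four Wronskians
  have val1 : α * (Jmat m * αᴴ) = 0 := by rw [← Matrix.mul_assoc]; exact hα2
  have val2 : α * (Jmat m * (Jmat m * αᴴ)) = -1 := by
    rw [show Jmat m * (Jmat m * αᴴ) = Jmat m * Jmat m * αᴴ from (Matrix.mul_assoc _ _ _).symm,
      hJJ]
    simp [hα1]
  have val3 : (Jmat m * αᴴ)ᴴ * (Jmat m * αᴴ) = 1 := by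
    calc (Jmat m * αᴴ)ᴴ * (Jmat m * αᴴ)
        = -(α * (Jmat m * (Jmat m * αᴴ))) := by
          rw [conjTranspose_mul, conjTranspose_conjTranspose, hJH]
          simp only [Matrix.mul_neg, Matrix.neg_mul, Matrix.mul_assoc]
      _ = 1 := by rw [val2, neg_neg]
  have val4 : (Jmat m * αᴴ)ᴴ * (Jmat m * (Jmat m * αᴴ)) = 0 := by
    calc (Jmat m * αᴴ)ᴴ * (Jmat m * (Jmat m * αᴴ))
        = -(α * (Jmat m * (Jmat m * (Jmat m * αᴴ)))) := by
          rw [conjTranspose_mul, conjTranspose_conjTranspose, hJH]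
          simp only [Matrix.mul_neg, Matrix.neg_mul, Matrix.mul_assoc]
      _ = 0 := by
          rw [show Jmat m * (Jmat m * (Jmat m * αᴴ)) = Jmat m * Jmat m * (Jmat m * αᴴ) from
            (Matrix.mul_assoc _ _ _).symm, hJJ]
          simp [val1]
  have w11 : (D * fromRows (Θ₁ (star z) ℓ) (Θ₂ (star z) (ℓ + 1)))ᴴ *
      (Jmat m * (D * fromRows (Θ₁ z ℓ) (Θ₂ z (ℓ + 1)))) = 0 := by
    rw [key (Θ₁ z) (Θ₂ z) (Θ₁ (star z)) (Θ₂ (star z)) (hsolΘ z) (hsolΘ (star z))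
      αᴴ αᴴ hΘz hΘc, conjTranspose_conjTranspose]
    exact val1
  have w12 : (D * fromRows (Θ₁ (star z) ℓ) (Θ₂ (star z) (ℓ + 1)))ᴴ *
      (Jmat m * (D * fromRows (Φ₁ z ℓ) (Φ₂ z (ℓ + 1)))) = -1 := by
    rw [key (Φ₁ z) (Φ₂ z) (Θ₁ (star z)) (Θ₂ (star z)) (hsolΦ z) (hsolΘ (star z))
      (Jmat m * αᴴ) αᴴ hΦz hΘc, conjTranspose_conjTranspose]
    exact val2
  have w21 : (D * fromRows (Φ₁ (star z) ℓ) (Φ₂ (star z) (ℓ + 1)))ᴴ *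
      (Jmat m * (D * fromRows (Θ₁ z ℓ) (Θ₂ z (ℓ + 1)))) = 1 := by
    rw [key (Θ₁ z) (Θ₂ z) (Φ₁ (star z)) (Φ₂ (star z)) (hsolΘ z) (hsolΦ (star z))
      αᴴ (Jmat m * αᴴ) hΘz hΦc]
    exact val3
  have w22 : (D * fromRows (Φ₁ (star z) ℓ) (Φ₂ (star z) (ℓ + 1)))ᴴ *
      (Jmat m * (D * fromRows (Φ₁ z ℓ) (Φ₂ z (ℓ + 1)))) = 0 := by
    rw [key (Φ₁ z) (Φ₂ z) (Φ₁ (star z)) (Φ₂ (star z)) (hsolΦ z) (hsolΦ (star z))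
      (Jmat m * αᴴ) (Jmat m * αᴴ) hΦz hΦc]
    exact val4
  -- assemble the 2m×2m identity
  set Θz := fromRows (Θ₁ z ℓ) (Θ₂ z (ℓ + 1)) with hΘzdef
  set Φz := fromRows (Φ₁ z ℓ) (Φ₂ z (ℓ + 1)) with hΦzdef
  set Θc := fromRows (Θ₁ (star z) ℓ) (Θ₂ (star z) (ℓ + 1)) with hΘcdef
  set Φc := fromRows (Φ₁ (star z) ℓ) (Φ₂ (star z) (ℓ + 1)) with hΦcdef
  have h1 : (fromCols (D * Θc) (D * Φc))ᴴ * (Jmat m * fromCols (D * Θz) (D * Φz))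
      = -(Jmat m) := by
    rw [conjTranspose_fromCols_eq_fromRows_conjTranspose, Matrix.mul_fromCols,
      fromRows_mul_fromCols, w11, w12, w21, w22]
    rw [Jmat]
    ext (i | i) (j | j) <;> simp [Matrix.fromBlocks, Matrix.one_apply]
  have h2 : (Jmat m * (fromCols (D * Θc) (D * Φc))ᴴ) * (Jmat m * fromCols (D * Θz) (D * Φz))
      = 1 := by
    rw [Matrix.mul_assoc, h1, Matrix.mul_neg, hJJ, neg_neg]
  have h3 : (Jmat m * fromCols (D * Θz) (D * Φz)) *
      (Jmat m * (fromCols (D * Θc) (D * Φc))ᴴ) = 1 := mul_eq_one_comm.mp h2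
  have h4 : fromCols (D * Θz) (D * Φz) * (Jmat m * (fromCols (D * Θc) (D * Φc))ᴴ)
      = -(Jmat m) := by
    calc fromCols (D * Θz) (D * Φz) * (Jmat m * (fromCols (D * Θc) (D * Φc))ᴴ)
        = ((-(Jmat m)) * Jmat m) *
            (fromCols (D * Θz) (D * Φz) * (Jmat m * (fromCols (D * Θc) (D * Φc))ᴴ)) := by
          rw [hnJJ, Matrix.one_mul]
      _ = (-(Jmat m)) * ((Jmat m * fromCols (D * Θz) (D * Φz)) *
            (Jmat m * (fromCols (D * Θc) (D * Φc))ᴴ)) := by simp only [Matrix.mul_assoc]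
      _ = -(Jmat m) := by rw [h3, Matrix.mul_one]
  have h5 : (β * fromCols (D * Θz) (D * Φz)) *
      (Jmat m * (β * fromCols (D * Θc) (D * Φc))ᴴ) = 0 := by
    rw [conjTranspose_mul]
    calc (β * fromCols (D * Θz) (D * Φz)) *
        (Jmat m * ((fromCols (D * Θc) (D * Φc))ᴴ * βᴴ))
        = β * (fromCols (D * Θz) (D * Φz) *
            (Jmat m * (fromCols (D * Θc) (D * Φc))ᴴ)) * βᴴ := by
          simp only [Matrix.mul_assoc]
      _ = 0 := by
          rw [h4, Matrix.mul_neg, Matrix.neg_mul, hβ2, neg_zero]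
  have hβP : β * fromCols (D * Θz) (D * Φz) = fromCols (β * D * Θz) (β * D * Φz) := by
    rw [Matrix.mul_fromCols]
    simp only [Matrix.mul_assoc]
  have hβQ : β * fromCols (D * Θc) (D * Φc) = fromCols (β * D * Θc) (β * D * Φc) := by
    rw [Matrix.mul_fromCols]
    simp only [Matrix.mul_assoc]
  rw [hβP, hβQ] at h5
  have key2 : (β * D * Θz) * (β * D * Φc)ᴴ = (β * D * Φz) * (β * D * Θc)ᴴ := by
    rw [conjTranspose_fromCols_eq_fromRows_conjTranspose] at h5
    rw [show Jmat m * fromRows (β * D * Θc)ᴴ (β * D * Φc)ᴴ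
        = fromRows ((β * D * Φc)ᴴ) (-(β * D * Θc)ᴴ) by
      rw [Jmat, fromBlocks_mul_fromRows]; simp] at h5
    rw [fromCols_mul_fromRows, Matrix.mul_neg] at h5
    exact add_neg_eq_zero.mp h5
  -- finish
  have hFzdet : IsUnit (β * D * Φz).det := (Matrix.isUnit_iff_isUnit_det _).mp hz
  have hFcdet : IsUnit (β * D * Φc).det := (Matrix.isUnit_iff_isUnit_det _).mp hzc
  have hFzHdet : IsUnit ((β * D * Φz)ᴴ).det := by
    rw [det_conjTranspose]; exact hFzdet.star
  have keyH : (β * D * Φc) * (β * D * Θz)ᴴ = (β * D * Θc) * (β * D * Φz)ᴴ := by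
    have := congrArg conjTranspose key2
    simpa [conjTranspose_mul] using this
  have final : (β * D * Φc)⁻¹ * (β * D * Θc) = (β * D * Θz)ᴴ * ((β * D * Φz)ᴴ)⁻¹ := by
    calc (β * D * Φc)⁻¹ * (β * D * Θc)
        = (β * D * Φc)⁻¹ * ((β * D * Θc) * (β * D * Φz)ᴴ * ((β * D * Φz)ᴴ)⁻¹) := by
          rw [Matrix.mul_nonsing_inv_cancel_right _ _ hFzHdet]
      _ = (β * D * Φc)⁻¹ * ((β * D * Φc) * ((β * D * Θz)ᴴ * ((β * D * Φz)ᴴ)⁻¹)) := by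
          rw [← keyH]; simp only [Matrix.mul_assoc]
      _ = (β * D * Θz)ᴴ * ((β * D * Φz)ᴴ)⁻¹ :=
          Matrix.nonsing_inv_mul_cancel_left _ _ hFcdet
  rw [conjTranspose_neg, conjTranspose_mul, conjTranspose_nonsing_inv]
  exact congrArg Neg.neg final
end

section
/- Riccati equation for solutions of the discrete Hamiltonian system: Suppose Ψ(z,·) ∈ ℂ^{2m×m} solves ρ(k)ψ₂(k+1) = (zA₁₁(k)+B₁₁(k))ψ₁(k) + (zA₁₂(k)+B₁₂(k))ψ₂(k) and ρ(k−1)ψ₁(k−1) = (zA₂₁(k)+B₂₁(k))ψ₁(k) + (zA₂₂(k)+B₂₂(k))ψ₂(k), and suppose ψ₁(k), ψ₂(k) are invertible for k in a discrete interval and zA₂₁+B₂₁ is invertible. Then V(z,k) := ρ(k)ψ₂(k+1)ψ₁(k)^{-1} satisfies the Riccati equation V(k) = (zA₁₁(k)+B₁₁(k)) + (zA₁₂(k)+B₁₂(k))[ρ(k−1)V(k−1)^{-1}ρ(k−1) − (zA₂₂(k)+B₂₂(k))]^{-1}(zA₂₁(k)+B₂₁(k)), provided the indicated inverses exist. -/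
open Matrix

/-- Riccati equation. If Ψ = (ψ₁, ψ₂) solves the block system
ρ(k)ψ₂(k+1) = (zA₁₁+B₁₁)ψ₁(k) + (zA₁₂+B₁₂)ψ₂(k),
ρ(k−1)ψ₁(k−1) = (zA₂₁+B₂₁)ψ₁(k) + (zA₂₂+B₂₂)ψ₂(k),
with the indicated invertibility, then V(k) = ρ(k)ψ₂(k+1)ψ₁(k)^{-1} satisfies
V(k) = (zA₁₁+B₁₁) + (zA₁₂+B₁₂)[ρ(k−1)V(k−1)^{-1}ρ(k−1) − (zA₂₂+B₂₂)]^{-1}(zA₂₁+B₂₁). -/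
theorem stmt14 {m : ℕ} (ρ : ℤ → Matrix (Fin m) (Fin m) ℂ)
    (A₁₁ A₁₂ A₂₁ A₂₂ B₁₁ B₁₂ B₂₁ B₂₂ : ℤ → Matrix (Fin m) (Fin m) ℂ)
    (hρu : ∀ j, IsUnit (ρ j))
    (z : ℂ) (ψ₁ ψ₂ : ℤ → Matrix (Fin m) (Fin m) ℂ) (k : ℤ)
    (heq1 : ρ k * ψ₂ (k + 1)
        = (z • A₁₁ k + B₁₁ k) * ψ₁ k + (z • A₁₂ k + B₁₂ k) * ψ₂ k)
    (heq2 : ρ (k - 1) * ψ₁ (k - 1)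
        = (z • A₂₁ k + B₂₁ k) * ψ₁ k + (z • A₂₂ k + B₂₂ k) * ψ₂ k)
    (hψ₁ : IsUnit (ψ₁ k)) (hψ₁' : IsUnit (ψ₁ (k - 1))) (hψ₂ : IsUnit (ψ₂ k))
    (h21 : IsUnit (z • A₂₁ k + B₂₁ k))
    (hV : IsUnit (ρ (k - 1) * ψ₂ ((k - 1) + 1) * (ψ₁ (k - 1))⁻¹))
    (hbr : IsUnit (ρ (k - 1) * (ρ (k - 1) * ψ₂ ((k - 1) + 1) * (ψ₁ (k - 1))⁻¹)⁻¹ * ρ (k - 1)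
        - (z • A₂₂ k + B₂₂ k))) :
    ρ k * ψ₂ (k + 1) * (ψ₁ k)⁻¹
      = (z • A₁₁ k + B₁₁ k) + (z • A₁₂ k + B₁₂ k) *
          (ρ (k - 1) * (ρ (k - 1) * ψ₂ ((k - 1) + 1) * (ψ₁ (k - 1))⁻¹)⁻¹ * ρ (k - 1)
            - (z • A₂₂ k + B₂₂ k))⁻¹ *
          (z • A₂₁ k + B₂₁ k) := by
  rw [show k - 1 + 1 = k from sub_add_cancel k 1] at hV hbr ⊢
  have hρd := (Matrix.isUnit_iff_isUnit_det _).mp (hρu (k - 1))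
  have hψ₁d := (Matrix.isUnit_iff_isUnit_det _).mp hψ₁
  have hψ₁'d := (Matrix.isUnit_iff_isUnit_det _).mp hψ₁'
  have hψ₂d := (Matrix.isUnit_iff_isUnit_det _).mp hψ₂
  have h21d := (Matrix.isUnit_iff_isUnit_det _).mp h21
  -- V(k-1)⁻¹
  have h1 : (ρ (k - 1) * ψ₂ k * (ψ₁ (k - 1))⁻¹)⁻¹
      = ψ₁ (k - 1) * (ψ₂ k)⁻¹ * (ρ (k - 1))⁻¹ := by
    rw [Matrix.mul_inv_rev, Matrix.mul_inv_rev, Matrix.nonsing_inv_nonsing_inv _ hψ₁'d,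
      mul_assoc]
  have h2 : ρ (k - 1) * (ρ (k - 1) * ψ₂ k * (ψ₁ (k - 1))⁻¹)⁻¹ * ρ (k - 1)
      = ρ (k - 1) * ψ₁ (k - 1) * (ψ₂ k)⁻¹ := by
    rw [h1]
    rw [mul_assoc, mul_assoc, Matrix.nonsing_inv_mul _ hρd, mul_one, ← mul_assoc]
  rw [h2] at hbr ⊢
  have h3 : ρ (k - 1) * ψ₁ (k - 1) * (ψ₂ k)⁻¹ - (z • A₂₂ k + B₂₂ k)
      = (z • A₂₁ k + B₂₁ k) * ψ₁ k * (ψ₂ k)⁻¹ := by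
    rw [heq2, add_mul, mul_assoc ((z • A₂₂ k + B₂₂ k)), Matrix.mul_nonsing_inv _ hψ₂d,
      mul_one, add_sub_cancel_right]
  rw [h3]
  have h4 : ((z • A₂₁ k + B₂₁ k) * ψ₁ k * (ψ₂ k)⁻¹)⁻¹
      = ψ₂ k * (ψ₁ k)⁻¹ * (z • A₂₁ k + B₂₁ k)⁻¹ := by
    rw [Matrix.mul_inv_rev, Matrix.mul_inv_rev, Matrix.nonsing_inv_nonsing_inv _ hψ₂d,
      mul_assoc]
  rw [h4, mul_assoc (z • A₁₂ k + B₁₂ k), mul_assoc (ψ₂ k * (ψ₁ k)⁻¹),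
    Matrix.nonsing_inv_mul _ h21d, mul_one, heq1, add_mul,
    mul_assoc (z • A₁₁ k + B₁₁ k), Matrix.mul_nonsing_inv _ hψ₁d, mul_one,
    mul_assoc (z • A₁₂ k + B₁₂ k)]
end
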